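/- For the semiclassical quantum plane, U = ℝ² with φ(x¹,x²) = x¹x², the function h equals h(x,π) = (1 − x²π₂)(1 + x¹π₁), and the connected component of {h > 0} containing ℝ² × {(0,0)} is exactly {(x¹,x²,π₁,π₂) ∈ ℝ⁴ : x¹π₁ > −1 and x²π₂ < 1}. -/

import Mathlib

open Set

noncomputable def pd1 (φ : ℝ × ℝ → ℝ) (p : ℝ × ℝ) : ℝ := fderiv ℝ φ p (1, 0)
noncomputable def pd2 (φ : ℝ × ℝ → ℝ) (p : ℝ × ℝ) : ℝ := fderiv ℝ φ p (0, 1)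

noncomputable def xf (φ : ℝ × ℝ → ℝ) (x π : ℝ × ℝ) : ℝ × ℝ :=
  (x.1 - φ x * π.2, x.2 + φ x * π.1)

noncomputable def hfun (φ : ℝ × ℝ → ℝ) (p : (ℝ × ℝ) × (ℝ × ℝ)) : ℝ :=
  if φ p.1 ≠ 0 then φ (xf φ p.1 p.2) / φ p.1
  else 1 - p.2.2 * pd1 φ p.1 + p.2.1 * pd2 φ p.1

/-- The Poisson structure of the semiclassical quantum plane. -/
noncomputable def φqp : ℝ × ℝ → ℝ := fun x => x.1 * x.2

/-- For the semiclassical quantum plane `φ(x¹,x²) = x¹x²`,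
`h(x,π) = (1 − x²π₂)(1 + x¹π₁)`, and the connected component of `{h > 0}`
containing `ℝ² × {(0,0)}` is `{x¹π₁ > −1, x²π₂ < 1}`. -/
theorem quantum_plane :
    (∀ p : (ℝ × ℝ) × (ℝ × ℝ),
        hfun φqp p = (1 - p.1.2 * p.2.2) * (1 + p.1.1 * p.2.1)) ∧
    (∀ x : ℝ × ℝ,
        connectedComponentIn {p : (ℝ × ℝ) × (ℝ × ℝ) | 0 < hfun φqp p}
            (x, ((0:ℝ), (0:ℝ)))
          = {p : (ℝ × ℝ) × (ℝ × ℝ) | p.1.1 * p.2.1 > -1 ∧ p.1.2 * p.2.2 < 1}) := by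
  
  have hform : ∀ p : (ℝ × ℝ) × (ℝ × ℝ),
      hfun φqp p = (1 - p.1.2 * p.2.2) * (1 + p.1.1 * p.2.1) := by
    intro p
    obtain ⟨⟨a, b⟩, ⟨c, d⟩⟩ := p
    have H : HasFDerivAt φqp
        (a • (ContinuousLinearMap.snd ℝ ℝ ℝ) + b • (ContinuousLinearMap.fst ℝ ℝ ℝ)) (a, b) :=
      (hasFDerivAt_fst (𝕜 := ℝ) (p := (a,b))).mul (hasFDerivAt_snd (𝕜 := ℝ) (p := (a,b)))
    have hfd : fderiv ℝ φqp (a, b) = a • (ContinuousLinearMap.snd ℝ ℝ ℝ) + b • (ContinuousLinearMap.fst ℝ ℝ ℝ) := H.fderiv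
    have h1 : pd1 φqp (a, b) = b := by simp [pd1, hfd]
    have h2 : pd2 φqp (a, b) = a := by simp [pd2, hfd]
    by_cases hab : a * b = 0
    · simp only [hfun, φqp, xf, hab, ne_eq, not_true_eq_false, if_false, h1, h2,
        not_not, if_neg]
      linear_combination c * d * hab
    · simp only [hfun, φqp, xf, ne_eq, hab, not_false_eq_true, ↓reduceIte]
      rw [div_eq_iff hab]
      ring
  refine ⟨hform, fun x => ?_⟩
  have hSeq : {p : (ℝ × ℝ) × (ℝ × ℝ) | 0 < hfun φqp p}
      = {p : (ℝ × ℝ) × (ℝ × ℝ) | 0 < (1 - p.1.2 * p.2.2) * (1 + p.1.1 * p.2.1)} := by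
    ext p; simp [hform]
  rw [hSeq]
  set pt : (ℝ × ℝ) × (ℝ × ℝ) := (x, ((0:ℝ), (0:ℝ))) with hpt
  set T : Set ((ℝ × ℝ) × (ℝ × ℝ)) :=
    {p | p.1.1 * p.2.1 > -1 ∧ p.1.2 * p.2.2 < 1} with hT
  set T' : Set ((ℝ × ℝ) × (ℝ × ℝ)) :=
    {p | p.1.1 * p.2.1 < -1 ∧ p.1.2 * p.2.2 > 1} with hT'
  set S : Set ((ℝ × ℝ) × (ℝ × ℝ)) :=
    {p | 0 < (1 - p.1.2 * p.2.2) * (1 + p.1.1 * p.2.1)} with hSdef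
  have hptT : pt ∈ T := by constructor <;> simp [hpt]
  have hptS : pt ∈ S := by simp [hpt, hSdef]
  have hc1 : Continuous fun p : (ℝ × ℝ) × (ℝ × ℝ) => p.1.1 * p.2.1 := by fun_prop
  have hc2 : Continuous fun p : (ℝ × ℝ) × (ℝ × ℝ) => p.1.2 * p.2.2 := by fun_prop
  have hTopen : IsOpen T :=
    (isOpen_lt continuous_const hc1).inter (isOpen_lt hc2 continuous_const)
  have hT'open : IsOpen T' :=
    (isOpen_lt hc1 continuous_const).inter (isOpen_lt continuous_const hc2)
  have hTsubS : T ⊆ S := by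
    rintro ⟨⟨a, b⟩, ⟨c, d⟩⟩ ⟨h1, h2⟩
    have h1' : a * c > -1 := h1
    have h2' : b * d < 1 := h2
    show 0 < (1 - b * d) * (1 + a * c)
    nlinarith
  have hSsub : S ⊆ T ∪ T' := by
    rintro ⟨⟨a, b⟩, ⟨c, d⟩⟩ hp
    have hp' : 0 < (1 - b * d) * (1 + a * c) := hp
    rcases mul_pos_iff.1 hp' with ⟨h1, h2⟩ | ⟨h1, h2⟩
    · exact Or.inl ⟨by linarith, by linarith⟩
    · exact Or.inr ⟨by linarith, by linarith⟩
  have hTpre : IsPreconnected T := by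
    apply isPreconnected_of_forall pt
    rintro ⟨⟨a, b⟩, ⟨c, d⟩⟩ ⟨h1, h2⟩
    have h1' : a * c > -1 := h1
    have h2' : b * d < 1 := h2
    refine ⟨segment ℝ (x, ((0:ℝ),(0:ℝ))) ((a,b), ((0:ℝ),(0:ℝ))) ∪
        segment ℝ ((a,b), ((0:ℝ),(0:ℝ))) ((a,b),(c,d)), ?_, ?_, ?_, ?_⟩
    · rintro z (hz | hz)
      · obtain ⟨s, t, hs, ht, hst, rfl⟩ := hz
        constructor <;> simp
      · obtain ⟨s, t, hs, ht, hst, rfl⟩ := hz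
        have e1 : (s • ((a,b), ((0:ℝ),(0:ℝ))) + t • ((a,b),(c,d)) :
            (ℝ × ℝ) × (ℝ × ℝ)) = ((a, b), (t * c, t * d)) := by
          simp only [Prod.smul_mk, Prod.mk_add_mk, smul_eq_mul, mul_zero,
            Prod.mk.injEq, zero_add]
          exact ⟨⟨by linear_combination a * hst, by linear_combination b * hst⟩, trivial⟩
        rw [e1]
        rcases ht.eq_or_lt with rfl | htpos
        · constructor
          · show a * ((0:ℝ) * c) > -1; simp
          · show b * ((0:ℝ) * d) < 1; simp
        · constructor
          · show a * (t * c) > -1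
            nlinarith [mul_pos htpos (show (0:ℝ) < a * c + 1 by linarith)]
          · show b * (t * d) < 1
            nlinarith [mul_pos htpos (show (0:ℝ) < 1 - b * d by linarith)]
    · exact Or.inl (left_mem_segment ℝ _ _)
    · exact Or.inr (right_mem_segment ℝ _ _)
    · exact IsPreconnected.union ((a,b),((0:ℝ),(0:ℝ)))
        (right_mem_segment ℝ _ _) (left_mem_segment ℝ _ _)
        ((convex_segment _ _).isPreconnected) ((convex_segment _ _).isPreconnected)
  apply Subset.antisymm
  · have hpre := isPreconnected_connectedComponentIn (x := pt) (F := S)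
    have hsub := connectedComponentIn_subset S pt
    refine hpre.subset_left_of_subset_union hTopen hT'open
      (Set.disjoint_left.mpr ?_) (hsub.trans hSsub) ?_
    · rintro ⟨⟨a, b⟩, ⟨c, d⟩⟩ ⟨h1, h2⟩ ⟨h3, h4⟩
      have h1' : a * c > -1 := h1
      have h3' : a * c < -1 := h3
      linarith
    · exact ⟨pt, mem_connectedComponentIn hptS, hptT⟩
  · exact hTpre.subset_connectedComponentIn hptT hTsubS
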